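/- For every real number w with 1/2 ≤ w < 1, the quartic polynomial f₂₂(x) = x⁴ − (w/(1−w))x³ − (w/(1−w))x² + (w/(1−w))x − w/(1−w)² has exactly one positive real root. -/

import Mathlib

theorem unique_positive_root_f22 (w : ℝ) (hw1 : 1/2 ≤ w) (hw2 : w < 1) :
    ∃! x : ℝ, 0 < x ∧
      x^4 - (w/(1-w))*x^3 - (w/(1-w))*x^2 + (w/(1-w))*x - w/(1-w)^2 = 0 := by
  have h1w : 0 < 1 - w := by linarith
  set a : ℝ := w/(1-w) with ha_def
  have ha : 1 ≤ a := by
    rw [ha_def, le_div_iff₀ h1w]; linarith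
  have hc : w/(1-w)^2 = a + a^2 := by
    rw [ha_def]; field_simp; ring
  set F : ℝ → ℝ := fun t => t^4 - a*t^3 - a*t^2 + a*t - (a + a^2) with hF
  have hFeq : ∀ t : ℝ, t^4 - (w/(1-w))*t^3 - (w/(1-w))*t^2 + (w/(1-w))*t - w/(1-w)^2 = F t := by
    intro t; rw [hF, hc]
  -- any positive root lies in (a, a+1)
  have hneg : ∀ t : ℝ, 0 < t → t ≤ a → F t < 0 := by
    intro t ht hta
    simp only [hF]
    nlinarith [mul_nonneg (mul_nonneg ht.le ht.le) (sub_nonneg.2 hta), sq_nonneg (t-1),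
      sq_nonneg t, mul_pos ht ht, mul_nonneg (sub_nonneg.2 hta) ht.le, sq_nonneg (2*t-1)]
  have hpos : ∀ t : ℝ, a + 1 ≤ t → 0 < F t := by
    intro t ht
    simp only [hF]
    nlinarith [mul_nonneg (mul_nonneg (mul_nonneg (by linarith : (0:ℝ) ≤ t)
      (by linarith : (0:ℝ) ≤ t)) (by linarith : (0:ℝ) ≤ t)) (by linarith : (0:ℝ) ≤ t - a - 1),
      sq_nonneg t, mul_pos (by linarith : (0:ℝ) < t) (by linarith : (0:ℝ) < t)]
  -- derivative
  have hder : ∀ t : ℝ, HasDerivAt F (4*t^3 - 3*a*t^2 - 2*a*t + a) t := by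
    intro t
    have h1 := hasDerivAt_pow 4 t
    have h2 := (hasDerivAt_pow 3 t).const_mul a
    have h3 := (hasDerivAt_pow 2 t).const_mul a
    have h4 := (hasDerivAt_id t).const_mul a
    have h := (((h1.sub h2).sub h3).add h4).sub_const (a + a^2)
    have h' := h.congr_deriv (show _ = 4*t^3 - 3*a*t^2 - 2*a*t + a by push_cast; ring)
    exact h'
  have hmono : StrictMonoOn F (Set.Ici a) := by
    apply strictMonoOn_of_deriv_pos (convex_Ici a)
    · exact Continuous.continuousOn (by fun_prop)
    · intro t ht
      rw [interior_Ici] at ht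
      rw [HasDerivAt.deriv (hder t)]
      have h1 : a < t := ht
      nlinarith [mul_pos (mul_pos (by linarith : (0:ℝ) < t) (by linarith : (0:ℝ) < t))
        (sub_pos.2 h1), sq_nonneg (t-1)]
  -- existence via IVT
  have hFa : F a < 0 := hneg a (by linarith) le_rfl
  have hFa1 : 0 < F (a+1) := hpos (a+1) le_rfl
  have hivt := intermediate_value_Icc (by linarith : a ≤ a + 1)
    (Continuous.continuousOn (by fun_prop) : ContinuousOn F (Set.Icc a (a+1)))
  have hmem : (0:ℝ) ∈ Set.Icc (F a) (F (a+1)) := ⟨hFa.le, hFa1.le⟩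
  obtain ⟨x, hx, hFx⟩ := hivt hmem
  have hxa : a < x := by
    rcases lt_or_eq_of_le hx.1 with h | h
    · exact h
    · exfalso; rw [← h] at hFx; linarith
  have hx0 : 0 < x := by linarith
  refine ⟨x, ⟨hx0, by rw [hFeq]; exact hFx⟩, ?_⟩
  rintro y ⟨hy0, hFy⟩
  rw [hFeq] at hFy
  have hya : a < y := by
    by_contra h
    push_neg at h
    have := hneg y hy0 h
    linarith
  exact hmono.injOn (Set.mem_Ici.2 hya.le) (Set.mem_Ici.2 hxa.le) (by rw [hFy, hFx])
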